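/- Let N be a positive integer and let w : ZMod N → ℂ be a nonzero function such that |w(x)| ∈ {0, 1} for all x (w is a partial isometry) and ‖w‖_∞ = N^(-1/2) · ‖𝓕 w‖₁ (𝓕 w is extremal). Then w is an extremal bi-partial isometry: |𝓕 w| is constant on supp 𝓕 w and ‖𝓕 w‖_∞ = N^(-1/2) · ‖w‖₁. (This is Proposition 3.9 of the paper, specialized to L^∞(ℤ/Nℤ).) -/

import Mathlib

open Complex Finset

/-- The unitary discrete Fourier transform on `ZMod N`. -/
noncomputable def dft (N : ℕ) [NeZero N] (f : ZMod N → ℂ) : ZMod N → ℂ :=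
  fun k => (((N : ℝ) ^ (-(1/2 : ℝ)) : ℝ) : ℂ) *
    ∑ x : ZMod N, f x *
      Complex.exp (-2 * Real.pi * Complex.I * (k.val : ℂ) * (x.val : ℂ) / (N : ℂ))

/-- The `ℓ¹` norm `‖f‖₁ = ∑ x, |f x|`. -/
noncomputable def l1norm (N : ℕ) [NeZero N] (f : ZMod N → ℂ) : ℝ :=
  ∑ x : ZMod N, ‖f x‖

/-- The `ℓ^∞` norm `‖f‖_∞ = max_x |f x|`. -/
noncomputable def linftyNorm (N : ℕ) [NeZero N] (f : ZMod N → ℂ) : ℝ :=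
  ⨆ x : ZMod N, ‖f x‖

lemma exp_eq_stdAddChar (N : ℕ) [NeZero N] (k x : ZMod N) :
    Complex.exp (-2 * Real.pi * Complex.I * (k.val : ℂ) * (x.val : ℂ) / (N : ℂ)) =
      ZMod.stdAddChar (-(k*x)) := by
  have h : (-(k*x) : ZMod N) = ((-(k.val * x.val : ℕ) : ℤ) : ZMod N) := by
    push_cast [ZMod.natCast_val, ZMod.cast_id]
    ring
  rw [h, ZMod.stdAddChar_coe]
  congr 1
  push_cast
  ring

lemma orth (N : ℕ) [NeZero N] (t : ZMod N) :
    ∑ k : ZMod N, ZMod.stdAddChar (k * t) = if t = 0 then (N : ℂ) else 0 := by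
  split_ifs with h
  · simp [h]
  · simp only [mul_comm _ t]
    exact AddChar.sum_eq_zero_of_ne_one (ZMod.isPrimitive_stdAddChar N h)

lemma conj_stdAddChar (N : ℕ) [NeZero N] (j : ZMod N) :
    (starRingEnd ℂ) (ZMod.stdAddChar j) = ZMod.stdAddChar (-j) := by
  simp [ZMod.stdAddChar_apply, AddChar.map_neg_eq_inv, ← Circle.coe_inv_eq_conj]

lemma abs_stdAddChar (N : ℕ) [NeZero N] (j : ZMod N) :
    ‖ZMod.stdAddChar j‖ = 1 := by
  simp [ZMod.stdAddChar_apply, Circle.norm_coe]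

lemma dft_eq (N : ℕ) [NeZero N] (f : ZMod N → ℂ) (k : ZMod N) :
    dft N f k = (((N : ℝ) ^ (-(1/2 : ℝ)) : ℝ) : ℂ) *
      ∑ x : ZMod N, f x * ZMod.stdAddChar (-(k*x)) := by
  unfold dft
  simp only [exp_eq_stdAddChar]

lemma c_sq (N : ℕ) [NeZero N] : ((N : ℝ) ^ (-(1/2 : ℝ)))^2 * (N : ℝ) = 1 := by
  have h : ((N : ℝ) ^ (-(1/2 : ℝ)))^2 = (N : ℝ)^(-1 : ℝ) := by
    rw [← Real.rpow_natCast ((N : ℝ) ^ (-(1/2 : ℝ))) 2, ← Real.rpow_mul (Nat.cast_nonneg N)]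
    norm_num
  rw [h, Real.rpow_neg_one, inv_mul_cancel₀ (Nat.cast_ne_zero.mpr (NeZero.ne N))]

lemma parseval (N : ℕ) [NeZero N] (f : ZMod N → ℂ) :
    ∑ k : ZMod N, (‖dft N f k‖)^2 = ∑ x : ZMod N, (‖f x‖)^2 := by
  set c : ℝ := (N : ℝ) ^ (-(1/2 : ℝ)) with hc
  have key : ∑ k : ZMod N, dft N f k * (starRingEnd ℂ) (dft N f k)
      = ∑ x : ZMod N, f x * (starRingEnd ℂ) (f x) := by
    have step1 : ∀ k : ZMod N, dft N f k * (starRingEnd ℂ) (dft N f k)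
        = ∑ x : ZMod N, ∑ y : ZMod N,
            (c:ℂ)^2 * (f x * (starRingEnd ℂ) (f y)) * ZMod.stdAddChar (k*(y-x)) := by
      intro k
      rw [dft_eq, map_mul, map_sum, Complex.conj_ofReal]
      rw [mul_mul_mul_comm, ← sq, Finset.sum_mul_sum]
      rw [Finset.mul_sum]
      refine Finset.sum_congr rfl fun x _ => ?_
      rw [Finset.mul_sum]
      refine Finset.sum_congr rfl fun y _ => ?_
      rw [map_mul, conj_stdAddChar, neg_neg]
      have hchar : ZMod.stdAddChar (-(k*x)) * ZMod.stdAddChar (k*y)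
          = ZMod.stdAddChar (k*(y-x)) := by
        rw [← AddChar.map_add_eq_mul]; congr 1; ring
      rw [← hchar]
      push_cast
      ring
    calc ∑ k : ZMod N, dft N f k * (starRingEnd ℂ) (dft N f k)
        = ∑ k : ZMod N, ∑ x : ZMod N, ∑ y : ZMod N,
            (c:ℂ)^2 * (f x * (starRingEnd ℂ) (f y)) * ZMod.stdAddChar (k*(y-x)) :=
          Finset.sum_congr rfl fun k _ => step1 k
      _ = ∑ x : ZMod N, ∑ y : ZMod N,
            (c:ℂ)^2 * (f x * (starRingEnd ℂ) (f y)) * ∑ k : ZMod N, ZMod.stdAddChar (k*(y-x)) := by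
          rw [Finset.sum_comm]
          refine Finset.sum_congr rfl fun x _ => ?_
          rw [Finset.sum_comm]
          refine Finset.sum_congr rfl fun y _ => ?_
          rw [Finset.mul_sum]
      _ = ∑ x : ZMod N, ∑ y : ZMod N,
            (c:ℂ)^2 * (f x * (starRingEnd ℂ) (f y)) * (if y - x = 0 then (N:ℂ) else 0) := by
          simp only [orth]
      _ = ∑ x : ZMod N, (c:ℂ)^2 * (f x * (starRingEnd ℂ) (f x)) * (N:ℂ) := by
          refine Finset.sum_congr rfl fun x _ => ?_
          simp [sub_eq_zero, mul_ite, Finset.sum_ite_eq', Finset.mem_univ]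
      _ = ∑ x : ZMod N, f x * (starRingEnd ℂ) (f x) := by
          refine Finset.sum_congr rfl fun x _ => ?_
          have : ((c:ℂ))^2 * (N:ℂ) = 1 := by
            rw [show ((c:ℂ))^2 = ((c^2 : ℝ) : ℂ) by push_cast; ring]
            rw [show ((N:ℂ)) = ((N:ℝ) : ℂ) by push_cast; ring]
            rw [← Complex.ofReal_mul, c_sq N, Complex.ofReal_one]
          calc (c:ℂ)^2 * (f x * (starRingEnd ℂ) (f x)) * (N:ℂ)
              = ((c:ℂ)^2 * (N:ℂ)) * (f x * (starRingEnd ℂ) (f x)) := by ring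
            _ = f x * (starRingEnd ℂ) (f x) := by rw [this, one_mul]
  have lhs : ∑ k : ZMod N, dft N f k * (starRingEnd ℂ) (dft N f k)
      = ((∑ k : ZMod N, (‖dft N f k‖)^2 : ℝ) : ℂ) := by
    push_cast
    refine Finset.sum_congr rfl fun k _ => ?_
    rw [Complex.mul_conj, ← Complex.sq_norm]
    push_cast
    ring
  have rhs : ∑ x : ZMod N, f x * (starRingEnd ℂ) (f x)
      = ((∑ x : ZMod N, (‖f x‖)^2 : ℝ) : ℂ) := by
    push_cast
    refine Finset.sum_congr rfl fun x _ => ?_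
    rw [Complex.mul_conj, ← Complex.sq_norm]
    push_cast
    ring
  have := key
  rw [lhs, rhs] at this
  exact_mod_cast this

/-- If w is a partial isometry (|w| takes values in {0,1}) and the Fourier
transform of w is extremal, then w is an extremal bi-partial isometry. -/
theorem partial_isometry_extremal_fourier (N : ℕ) [NeZero N] (w : ZMod N → ℂ)
    (hw : w ≠ 0)
    (hpi : ∀ x : ZMod N, ‖w x‖ = 0 ∨ ‖w x‖ = 1)
    (hext : linftyNorm N w = (N : ℝ) ^ (-(1/2 : ℝ)) * l1norm N (dft N w)) :
    (∀ x ∈ Function.support (dft N w), ∀ y ∈ Function.support (dft N w),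
        ‖dft N w x‖ = ‖dft N w y‖) ∧
      linftyNorm N (dft N w) = (N : ℝ) ^ (-(1/2 : ℝ)) * l1norm N w := by
  set c : ℝ := (N : ℝ) ^ (-(1/2 : ℝ)) with hc
  have hcpos : 0 < c := Real.rpow_pos_of_pos (by exact_mod_cast Nat.pos_of_ne_zero (NeZero.ne N)) _
  set F : ZMod N → ℂ := dft N w with hF
  set s : ℝ := l1norm N w with hs
  set L : ℝ := l1norm N (dft N w) with hL
  set M : ℝ := linftyNorm N (dft N w) with hM
  have hbddF : BddAbove (Set.range fun k : ZMod N => ‖F k‖) :=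
    Set.Finite.bddAbove (Set.finite_range _)
  have hbddw : BddAbove (Set.range fun x : ZMod N => ‖w x‖) :=
    Set.Finite.bddAbove (Set.finite_range _)
  -- ‖w‖∞ = 1
  have hwinf : linftyNorm N w = 1 := by
    obtain ⟨x₀, hx₀⟩ := Function.ne_iff.mp hw
    have h1 : ‖w x₀‖ = 1 :=
      (hpi x₀).resolve_left (fun h => hx₀ (by simpa using (norm_eq_zero.mp h)))
    refine le_antisymm (ciSup_le fun x => ?_) ?_
    · rcases hpi x with h | h <;> rw [h] <;> norm_num
    · rw [← h1]; exact le_ciSup hbddw x₀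
  -- c * L = 1
  have h4 : c * L = 1 := by rw [← hext, hwinf]
  have hLpos : 0 < L := by
    by_contra h
    push_neg at h
    nlinarith
  -- pointwise bound on |F k|
  have hFk : ∀ k : ZMod N, ‖F k‖ ≤ c * s := by
    intro k
    rw [hF, show dft N w k = ((c : ℝ) : ℂ) *
        ∑ x : ZMod N, w x * ZMod.stdAddChar (-(k*x)) by
      unfold dft; simp only [exp_eq_stdAddChar]; rfl]
    rw [norm_mul, Complex.norm_real, Real.norm_of_nonneg hcpos.le]
    refine mul_le_mul_of_nonneg_left ?_ hcpos.le
    calc ‖∑ x : ZMod N, w x * ZMod.stdAddChar (-(k*x))‖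
        ≤ ∑ x : ZMod N, ‖w x * ZMod.stdAddChar (-(k*x))‖ :=
          norm_sum_le _ _
      _ = s := by
          rw [hs]; unfold l1norm
          refine Finset.sum_congr rfl fun x _ => ?_
          rw [norm_mul, abs_stdAddChar, mul_one]
  have hMle : M ≤ c * s := ciSup_le hFk
  have hMge : ∀ k : ZMod N, ‖F k‖ ≤ M := fun k => le_ciSup hbddF k
  have hM0 : 0 ≤ M := le_trans (norm_nonneg _) (hMge 0)
  -- Parseval + |w|² = |w|
  have hpar : ∑ k : ZMod N, (‖F k‖)^2 = s := by
    rw [hF, parseval, hs]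
    unfold l1norm
    refine Finset.sum_congr rfl fun x _ => ?_
    rcases hpi x with h | h <;> rw [h] <;> norm_num
  have h2 : ∑ k : ZMod N, (‖F k‖)^2 ≤ M * L := by
    rw [hL]
    unfold l1norm
    rw [Finset.mul_sum]
    refine Finset.sum_le_sum fun k _ => ?_
    rw [sq]
    exact mul_le_mul_of_nonneg_right (hMge k) (norm_nonneg _)
  have h5 : M * L ≤ c * s * L := mul_le_mul_of_nonneg_right hMle hLpos.le
  have h6 : c * s * L = s := by
    calc c * s * L = s * (c * L) := by ring
      _ = s := by rw [h4, mul_one]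
  have heq : M * L = s := le_antisymm (h5.trans_eq h6) (hpar ▸ h2)
  have hMval : M = c * s := by
    calc M = M * (c * L) := by rw [h4, mul_one]
      _ = c * (M * L) := by ring
      _ = c * s := by rw [heq]
  constructor
  · -- constancy on support
    have hsum0 : ∑ k : ZMod N, (M * ‖F k‖ - (‖F k‖)^2) = 0 := by
      rw [Finset.sum_sub_distrib, hpar, ← Finset.mul_sum]
      have : ∑ k : ZMod N, ‖F k‖ = L := by rw [hL]; rfl
      rw [this, heq, sub_self]
    have hall : ∀ k : ZMod N, M * ‖F k‖ - (‖F k‖)^2 = 0 := by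
      intro k
      refine (Finset.sum_eq_zero_iff_of_nonneg fun j _ => ?_).mp hsum0 k (Finset.mem_univ k)
      have := hMge j
      nlinarith [norm_nonneg (F j)]
    intro x hx y hy
    have hFx : ‖F x‖ ≠ 0 := by
      simpa [hF] using norm_ne_zero_iff.mpr (Function.mem_support.mp hx)
    have hFy : ‖F y‖ ≠ 0 := by
      simpa [hF] using norm_ne_zero_iff.mpr (Function.mem_support.mp hy)
    have ex : ‖F x‖ = M := by
      have := hall x
      have h' : ‖F x‖ * (M - ‖F x‖) = 0 := by nlinarith
      rcases mul_eq_zero.mp h' with h'' | h''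
      · exact absurd h'' hFx
      · linarith
    have ey : ‖F y‖ = M := by
      have := hall y
      have h' : ‖F y‖ * (M - ‖F y‖) = 0 := by nlinarith
      rcases mul_eq_zero.mp h' with h'' | h''
      · exact absurd h'' hFy
      · linarith
    rw [hF] at ex ey ⊢
    rw [ex, ey]
  · exact hMval
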